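/- The classes of tree languages recognizable by global Parikh tree automata (GPTA) and by non-global Parikh tree automata (PTA) are incomparable: there is a GPTA-recognizable tree language that is not PTA-recognizable (namely L_{γγ} = {σ(γⁿ#,γⁿ#) | n ∈ ℕ}), and a PTA-recognizable tree language that is not GPTA-recognizable (namely L_ab, the trees over {a⁽²⁾,b⁽²⁾,#⁽⁰⁾} all of whose complete path words have the form aⁿbⁿ# with n ≥ 1). -/

import Mathlib

/-! ## Trees over ranked alphabets: a symbol `s` has `ar s` children -/

inductive GTree (S : Type) (ar : S → ℕ) : Type where
  | node (s : S) (c : Fin (ar s) → GTree S ar) : GTree S ar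

namespace GTree
variable {S : Type} {ar : S → ℕ}

/-- The height of a tree (leaves have height 0). -/
def height : GTree S ar → ℕ
  | node _ c => Finset.univ.sup fun i => height (c i) + 1

/-- The size (number of positions) of a tree. -/
def size : GTree S ar → ℕ
  | node _ c => 1 + ∑ i, size (c i)

/-- The subtree at a position (a list of child indices), if the position exists. -/
def subAt : GTree S ar → List ℕ → Option (GTree S ar)
  | t, [] => some t
  | node s c, i :: ρ => if h : i < ar s then subAt (c ⟨i, h⟩) ρ else none

/-- The list of path words of all complete (root-to-leaf) paths. -/
def pathWords : GTree S ar → List (List S)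
  | node s c =>
    if _ : ar s = 0 then [[s]]
    else ((List.finRange (ar s)).map fun i => (pathWords (c i)).map (s :: ·)).flatten

end GTree

/-! ## Semilinear sets -/

def IsLinearSetFin {m : ℕ} (C : Set (Fin m → ℕ)) : Prop :=
  ∃ (l : ℕ) (d0 : Fin m → ℕ) (d : Fin l → Fin m → ℕ),
    C = {v | ∃ c : Fin l → ℕ, v = d0 + ∑ i, c i • d i}

def IsSemilinear {m : ℕ} (C : Set (Fin m → ℕ)) : Prop :=
  ∃ (k : ℕ) (L : Fin k → Set (Fin m → ℕ)), (∀ i, IsLinearSetFin (L i)) ∧ C = ⋃ i, L i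

/-! ## Non-global Parikh tree automata (PTA) -/

structure PTA (S : Type) (ar : S → ℕ) (m : ℕ) where
  Q : Type
  finQ : Fintype Q
  init : Q
  D : Finset (Fin m → ℕ)
  trans : Q → (s : S) → (Fin (ar s) → Q × (Fin m → ℕ)) → Prop
  transD : ∀ q s f, trans q s f → ∀ i, (f i).2 ∈ D
  C : Set (Fin m → ℕ)
  semiC : IsSemilinear C

/-- `A.Acc q w ξ` : starting in configuration `(q, w)`, the automaton `A` can compute
the tree `ξ`, adding counter vectors pathwise; a nullary transition additionally
requires the current counter vector to lie in `A.C`. -/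
inductive PTA.Acc {S : Type} {ar : S → ℕ} {m : ℕ} (A : PTA S ar m) :
    A.Q → (Fin m → ℕ) → GTree S ar → Prop where
  | node {q : A.Q} {w : Fin m → ℕ} {s : S} {f : Fin (ar s) → A.Q × (Fin m → ℕ)}
      {c : Fin (ar s) → GTree S ar}
      (ht : A.trans q s f) (hC : ar s = 0 → w ∈ A.C)
      (hc : ∀ i, PTA.Acc A (f i).1 (w + (f i).2) (c i)) :
      PTA.Acc A q w (.node s c)

def PTA.Lang {S : Type} {ar : S → ℕ} {m : ℕ} (A : PTA S ar m) : Set (GTree S ar) :=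
  {ξ | A.Acc A.init 0 ξ}

/-! ## Global Parikh tree automata (GPTA) -/

structure GPTA (S : Type) (ar : S → ℕ) (m : ℕ) where
  Q : Type
  finQ : Fintype Q
  init : Q
  D : Finset (Fin m → ℕ)
  trans : Q → (s : S) → (Fin m → ℕ) → (Fin (ar s) → Q) → Prop
  transD : ∀ q s d f, trans q s d f → d ∈ D
  C : Set (Fin m → ℕ)
  semiC : IsSemilinear C

/-- `A.Run q ξ v` : there is a run of `A` from state `q` on a `D`-decoration of `ξ`
whose extended Parikh image (the sum of all vectors over all positions) is `v`. -/
inductive GPTA.Run {S : Type} {ar : S → ℕ} {m : ℕ} (A : GPTA S ar m) :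
    A.Q → GTree S ar → (Fin m → ℕ) → Prop where
  | node {q : A.Q} {s : S} {d : Fin m → ℕ} {f : Fin (ar s) → A.Q}
      {c : Fin (ar s) → GTree S ar} {v : Fin (ar s) → Fin m → ℕ}
      (ht : A.trans q s d f) (hc : ∀ i, GPTA.Run A (f i) (c i) (v i)) :
      GPTA.Run A q (.node s c) (d + ∑ i, v i)

def GPTA.Lang {S : Type} {ar : S → ℕ} {m : ℕ} (A : GPTA S ar m) : Set (GTree S ar) :=
  {ξ | ∃ v, A.Run A.init ξ v ∧ v ∈ A.C}

/-! ## The ranked alphabet {a⁽²⁾, b⁽²⁾, #⁽⁰⁾} and the tree language L_ab -/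

inductive Sab : Type where | a | b | hash
  deriving DecidableEq

def arAb : Sab → ℕ
  | .a => 2
  | .b => 2
  | .hash => 0

instance : Fintype Sab :=
  ⟨⟨{Sab.a, Sab.b, Sab.hash}, by decide⟩, fun x => by cases x <;> decide⟩

/-- All trees each of whose complete path words has the form `aⁿbⁿ#`, `n ≥ 1`. -/
def Lab : Set (GTree Sab arAb) :=
  {ξ | ∀ w ∈ ξ.pathWords, ∃ n ≥ 1,
    w = List.replicate n Sab.a ++ List.replicate n Sab.b ++ [Sab.hash]}

/-! ## The ranked alphabet {σ⁽²⁾, γ⁽¹⁾, #⁽⁰⁾} -/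

inductive Sg : Type where | sig | gam | hash
  deriving DecidableEq

def arG : Sg → ℕ
  | .sig => 2
  | .gam => 1
  | .hash => 0

instance : Fintype Sg :=
  ⟨⟨{Sg.sig, Sg.gam, Sg.hash}, by decide⟩, fun x => by cases x <;> decide⟩

def hashT : GTree Sg arG := .node .hash ![]
def gamT (t : GTree Sg arG) : GTree Sg arG := .node .gam ![t]
def sigT (l r : GTree Sg arG) : GTree Sg arG := .node .sig ![l, r]

/-- γⁿ(t) -/
def gpow : ℕ → GTree Sg arG → GTree Sg arG
  | 0, t => t
  | n + 1, t => gamT (gpow n t)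

/-- L_γγ = {σ(γⁿ#, γⁿ#) | n ∈ ℕ} -/
def Lgg : Set (GTree Sg arG) := {ξ | ∃ n, ξ = sigT (gpow n hashT) (gpow n hashT)}

/-- L₃ = {γⁿ(σ(γⁿ#, γⁿ#)) | n ∈ ℕ} -/
def L3 : Set (GTree Sg arG) := {ξ | ∃ n, ξ = gpow n (sigT (gpow n hashT) (gpow n hashT))}

namespace GTree
variable {S : Type} {ar : S → ℕ}

lemma pathWords_ne_nil : ∀ t : GTree S ar, t.pathWords ≠ [] := by
  intro t
  induction t with
  | node s c ih =>
    rw [pathWords]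
    split
    · simp
    · next h =>
      simp only [ne_eq, List.flatten_eq_nil_iff, List.mem_map, List.mem_finRange,
        true_and, not_forall]
      have : 0 < ar s := Nat.pos_of_ne_zero h
      refine ⟨(pathWords (c ⟨0, this⟩)).map (s :: ·), ⟨⟨0, this⟩, rfl⟩, ?_⟩
      simp [ih]

lemma mem_pathWords_node {s : S} (h : ar s ≠ 0) {c : Fin (ar s) → GTree S ar}
    {w : List S} :
    w ∈ (GTree.node s c).pathWords ↔ ∃ i w', w' ∈ (c i).pathWords ∧ w = s :: w' := by
  rw [pathWords]
  simp only [dif_neg h, List.mem_flatten, List.mem_map, List.mem_finRange, true_and]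
  constructor
  · rintro ⟨l, ⟨i, rfl⟩, hw⟩
    simp only [List.mem_map] at hw
    obtain ⟨w', hw', rfl⟩ := hw
    exact ⟨i, w', hw', rfl⟩
  · rintro ⟨i, w', hw', rfl⟩
    exact ⟨(pathWords (c i)).map (s :: ·), ⟨i, rfl⟩, List.mem_map_of_mem hw'⟩

lemma pathWords_head : ∀ (t : GTree S ar) (s : S) (c : Fin (ar s) → GTree S ar),
    t = GTree.node s c → ∀ w ∈ t.pathWords, ∃ w', w = s :: w' := by
  rintro t s c rfl w hw
  by_cases h : ar s = 0
  · rw [pathWords] at hw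
    rw [dif_pos h] at hw
    simp at hw
    exact ⟨[], hw⟩
  · obtain ⟨i, w', _, rfl⟩ := (mem_pathWords_node h).1 hw
    exact ⟨w', rfl⟩

end GTree
/-! ### Generic helpers -/

lemma sum0 {M : Type*} [AddCommMonoid M] {k : ℕ} (hk : k = 0) (v : Fin k → M) :
    ∑ i, v i = 0 := by subst hk; simp

lemma sum1 {M : Type*} [AddCommMonoid M] {k : ℕ} (hk : k = 1) (v : Fin k → M) :
    ∑ i, v i = v ⟨0, by omega⟩ := by subst hk; exact Fin.sum_univ_one v

lemma sum2 {M : Type*} [AddCommMonoid M] {k : ℕ} (hk : k = 2) (v : Fin k → M) :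
    ∑ i, v i = v ⟨0, by omega⟩ + v ⟨1, by omega⟩ := by subst hk; exact Fin.sum_univ_two v

lemma GPTA.run_node_inv {S : Type} {ar : S → ℕ} {m : ℕ} (A : GPTA S ar m)
    {q : A.Q} {s : S} {c : Fin (ar s) → GTree S ar} {vv : Fin m → ℕ}
    (h : A.Run q (.node s c) vv) :
    ∃ (d : Fin m → ℕ) (f : Fin (ar s) → A.Q) (v : Fin (ar s) → Fin m → ℕ),
      A.trans q s d f ∧ (∀ i, A.Run (f i) (c i) (v i)) ∧ vv = d + ∑ i, v i := by
  cases h with | node ht hc => exact ⟨_, _, _, ht, hc, rfl⟩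

lemma PTA.acc_node_inv {S : Type} {ar : S → ℕ} {m : ℕ} (A : PTA S ar m)
    {q : A.Q} {w : Fin m → ℕ} {s : S} {c : Fin (ar s) → GTree S ar}
    (h : A.Acc q w (.node s c)) :
    ∃ f, A.trans q s f ∧ (ar s = 0 → w ∈ A.C) ∧
      ∀ i, A.Acc (f i).1 (w + (f i).2) (c i) := by
  cases h with | node ht hC hc => exact ⟨_, ht, hC, hc⟩

/-! ### Part 1 : a GPTA for L_γγ -/

inductive Qg : Type where | I | L | R
  deriving DecidableEq

instance : Fintype Qg :=
  ⟨⟨{Qg.I, Qg.L, Qg.R}, by decide⟩, fun x => by cases x <;> decide⟩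

def eL : Fin 2 → ℕ := fun i => if (i : ℕ) = 0 then 1 else 0
def eR : Fin 2 → ℕ := fun i => if (i : ℕ) = 0 then 0 else 1

def transG : Qg → (s : Sg) → (Fin 2 → ℕ) → (Fin (arG s) → Qg) → Prop
  | .I, .sig, d, f => d = 0 ∧ f ⟨0, by decide⟩ = .L ∧ f ⟨1, by decide⟩ = .R
  | .L, .gam, d, f => d = eL ∧ f ⟨0, by decide⟩ = .L
  | .R, .gam, d, f => d = eR ∧ f ⟨0, by decide⟩ = .R
  | .L, .hash, d, _ => d = 0
  | .R, .hash, d, _ => d = 0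
  | _, _, _, _ => False

def Agg : GPTA Sg arG 2 where
  Q := Qg
  finQ := inferInstance
  init := .I
  D := {0, eL, eR}
  trans := transG
  transD := by
    intro q s d f h
    cases q <;> cases s <;> simp only [transG] at h <;>
      first
        | (obtain ⟨rfl, -⟩ := h; simp)
        | (subst h; simp)
  C := {v | v 0 = v 1}
  semiC := by
    refine ⟨1, fun _ => {v | v 0 = v 1}, fun _ => ⟨1, 0, fun _ => fun _ => 1, ?_⟩,
      (Set.iUnion_const _).symm⟩
    ext v
    simp only [Set.mem_setOf_eq, Fin.sum_univ_one]
    constructor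
    · intro h
      refine ⟨fun _ => v 0, funext fun j => ?_⟩
      fin_cases j <;> simp [h]
    · rintro ⟨c, rfl⟩; simp
lemma agg_chain : ∀ (t : GTree Sg arG) (q : Qg) (w : Fin 2 → ℕ), Agg.Run q t w →
    (q = .L → ∃ n, t = gpow n hashT ∧ w = n • eL) ∧
    (q = .R → ∃ n, t = gpow n hashT ∧ w = n • eR) := by
  intro t
  induction t with
  | node s c ih =>
    intro q w h
    obtain ⟨d, f, v, ht, hc, rfl⟩ := Agg.run_node_inv h
    refine ⟨?_, ?_⟩ <;> rintro rfl <;> cases s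
    · exact False.elim ht
    · have ht' : d = eL ∧ f ⟨0, by decide⟩ = Qg.L := ht
      obtain ⟨rfl, hf⟩ := ht'
      have h0 := hc ⟨0, by decide⟩
      rw [hf] at h0
      obtain ⟨n, h1, h2⟩ := (ih ⟨0, by decide⟩ _ _ h0).1 rfl
      refine ⟨n + 1, ?_, ?_⟩
      · have hcc : c = ![gpow n hashT] := by
          funext i
          rcases i with ⟨iv, hiv⟩
          have hiv' : iv < 1 := hiv
          interval_cases iv
          exact h1
        rw [hcc]; rfl
      · rw [sum1 (k := arG Sg.gam) rfl v, h2, succ_nsmul]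
        exact add_comm _ _
    · have ht' : d = 0 := ht
      refine ⟨0, ?_, ?_⟩
      · have hcc : c = ![] := by
          funext i; exact absurd i.isLt (Nat.not_lt_zero _)
        rw [hcc]; rfl
      · rw [ht', sum0 (k := arG Sg.hash) rfl v]; simp
    · exact False.elim ht
    · have ht' : d = eR ∧ f ⟨0, by decide⟩ = Qg.R := ht
      obtain ⟨rfl, hf⟩ := ht'
      have h0 := hc ⟨0, by decide⟩
      rw [hf] at h0
      obtain ⟨n, h1, h2⟩ := (ih ⟨0, by decide⟩ _ _ h0).2 rfl
      refine ⟨n + 1, ?_, ?_⟩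
      · have hcc : c = ![gpow n hashT] := by
          funext i
          rcases i with ⟨iv, hiv⟩
          have hiv' : iv < 1 := hiv
          interval_cases iv
          exact h1
        rw [hcc]; rfl
      · rw [sum1 (k := arG Sg.gam) rfl v, h2, succ_nsmul]
        exact add_comm _ _
    · have ht' : d = 0 := ht
      refine ⟨0, ?_, ?_⟩
      · have hcc : c = ![] := by
          funext i; exact absurd i.isLt (Nat.not_lt_zero _)
        rw [hcc]; rfl
      · rw [ht', sum0 (k := arG Sg.hash) rfl v]; simp
lemma agg_run_gpow (n : ℕ) :
    Agg.Run Qg.L (gpow n hashT) (n • eL) ∧ Agg.Run Qg.R (gpow n hashT) (n • eR) := by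
  induction n with
  | zero =>
    constructor
    · have h := GPTA.Run.node (A := Agg) (q := Qg.L) (s := Sg.hash) (d := 0)
        (f := fun _ => Qg.L) (c := ![]) (v := fun _ => 0) rfl
        (fun i => absurd i.isLt (Nat.not_lt_zero _))
      have hv : (0 : Fin 2 → ℕ) + ∑ i : Fin (arG Sg.hash), (fun _ => (0 : Fin 2 → ℕ)) i
          = (0 : ℕ) • eL := by
        rw [sum0 (k := arG Sg.hash) rfl]; simp
      rw [hv] at h
      exact h
    · have h := GPTA.Run.node (A := Agg) (q := Qg.R) (s := Sg.hash) (d := 0)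
        (f := fun _ => Qg.R) (c := ![]) (v := fun _ => 0) rfl
        (fun i => absurd i.isLt (Nat.not_lt_zero _))
      have hv : (0 : Fin 2 → ℕ) + ∑ i : Fin (arG Sg.hash), (fun _ => (0 : Fin 2 → ℕ)) i
          = (0 : ℕ) • eR := by
        rw [sum0 (k := arG Sg.hash) rfl]; simp
      rw [hv] at h
      exact h
  | succ n ihn =>
    constructor
    · have h := GPTA.Run.node (A := Agg) (q := Qg.L) (s := Sg.gam) (d := eL)
        (f := fun _ => Qg.L) (c := ![gpow n hashT]) (v := fun _ => n • eL)
        (⟨rfl, rfl⟩ : eL = eL ∧ Qg.L = Qg.L) (fun i => ?_)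
      case refine_2 =>
        have hv : eL + ∑ i : Fin (arG Sg.gam), (fun _ => n • eL) i = (n + 1) • eL := by
          rw [sum1 (k := arG Sg.gam) rfl, succ_nsmul]; exact add_comm _ _
        rw [hv] at h
        exact h
      case refine_1 =>
        rcases i with ⟨iv, hiv⟩
        have hiv' : iv < 1 := hiv
        interval_cases iv
        exact ihn.1
    · have h := GPTA.Run.node (A := Agg) (q := Qg.R) (s := Sg.gam) (d := eR)
        (f := fun _ => Qg.R) (c := ![gpow n hashT]) (v := fun _ => n • eR)
        (⟨rfl, rfl⟩ : eR = eR ∧ Qg.R = Qg.R) (fun i => ?_)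
      case refine_2 =>
        have hv : eR + ∑ i : Fin (arG Sg.gam), (fun _ => n • eR) i = (n + 1) • eR := by
          rw [sum1 (k := arG Sg.gam) rfl, succ_nsmul]; exact add_comm _ _
        rw [hv] at h
        exact h
      case refine_1 =>
        rcases i with ⟨iv, hiv⟩
        have hiv' : iv < 1 := hiv
        interval_cases iv
        exact ihn.2
lemma part1 : Agg.Lang = Lgg := by
  ext ξ
  simp only [GPTA.Lang, Set.mem_setOf_eq, Lgg]
  constructor
  · rintro ⟨v, hrun, hC⟩
    rcases ξ with ⟨s, c⟩
    obtain ⟨d, f, vv, ht, hc, rfl⟩ := Agg.run_node_inv hrun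
    cases s
    case gam => exact False.elim ht
    case hash => exact False.elim ht
    case sig =>
    have ht' : d = 0 ∧ f ⟨0, by decide⟩ = Qg.L ∧ f ⟨1, by decide⟩ = Qg.R := ht
    obtain ⟨rfl, hf0, hf1⟩ := ht'
    have h0 := hc ⟨0, by decide⟩
    have h1 := hc ⟨1, by decide⟩
    rw [hf0] at h0
    rw [hf1] at h1
    obtain ⟨n, hn, hvn⟩ := (agg_chain _ _ _ h0).1 rfl
    obtain ⟨k, hk, hvk⟩ := (agg_chain _ _ _ h1).2 rfl
    have hsum := sum2 (k := arG Sg.sig) rfl vv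
    rw [hsum, hvn, hvk] at hC
    have hCC : ((0 : Fin 2 → ℕ) + (n • eL + k • eR)) 0
        = ((0 : Fin 2 → ℕ) + (n • eL + k • eR)) 1 := hC
    simp only [Pi.add_apply, Pi.smul_apply, Pi.zero_apply, smul_eq_mul, eL, eR] at hCC
    norm_num at hCC
    subst hCC
    refine ⟨n, ?_⟩
    have hcc : c = ![gpow n hashT, gpow n hashT] := by
      funext i
      rcases i with ⟨iv, hiv⟩
      have hiv' : iv < 2 := hiv
      interval_cases iv
      · exact hn
      · exact hk
    rw [hcc]
    rfl
  · rintro ⟨n, rfl⟩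
    have hL := (agg_run_gpow n).1
    have hR := (agg_run_gpow n).2
    have ht : Agg.trans Qg.I Sg.sig 0 (fun i => if (i : ℕ) = 0 then Qg.L else Qg.R) :=
      ⟨rfl, rfl, rfl⟩
    have h := GPTA.Run.node (A := Agg) (q := Qg.I) (s := Sg.sig) (d := 0)
      (f := fun i => if (i : ℕ) = 0 then Qg.L else Qg.R)
      (c := ![gpow n hashT, gpow n hashT])
      (v := fun i => if (i : ℕ) = 0 then n • eL else n • eR) ht (fun i => ?_)
    case refine_2 =>
      refine ⟨_, h, ?_⟩
      have hsum := sum2 (k := arG Sg.sig) rfl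
        (fun i : Fin (arG Sg.sig) => if (i : ℕ) = 0 then n • eL else n • eR)
      show _ ∈ Agg.C
      rw [hsum]
      have : ((0 : Fin 2 → ℕ) + (n • eL + n • eR)) 0
          = ((0 : Fin 2 → ℕ) + (n • eL + n • eR)) 1 := by
        simp [eL, eR]
      exact this
    case refine_1 =>
      rcases i with ⟨iv, hiv⟩
      have hiv' : iv < 2 := hiv
      interval_cases iv
      · exact hL
      · exact hR
lemma gpow_inj : ∀ {n k : ℕ}, gpow n hashT = gpow k hashT → n = k := by
  intro n
  induction n with
  | zero =>
    intro k h
    cases k with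
    | zero => rfl
    | succ k => exact absurd h (by simp [hashT, gamT, gpow]; intro h'; injection h' with h1 h2; cases h1)
  | succ n ih =>
    intro k h
    cases k with
    | zero => exact absurd h (by simp [hashT, gamT, gpow]; intro h'; injection h' with h1 h2; cases h1)
    | succ k =>
      have h' : (![gpow n hashT] : Fin (arG Sg.gam) → _) = ![gpow k hashT] := by
        injection h with h1 h2
      have := congrFun h' ⟨0, by decide⟩
      exact congrArg Nat.succ (ih this)

lemma part2 : ¬ ∃ (m : ℕ) (A : PTA Sg arG m), A.Lang = Lgg := by
  rintro ⟨m, A, hA⟩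
  haveI := A.finQ
  have hmem : ∀ n : ℕ, A.Acc A.init 0 (sigT (gpow n hashT) (gpow n hashT)) := by
    intro n
    have h : sigT (gpow n hashT) (gpow n hashT) ∈ A.Lang := by
      rw [hA]; exact ⟨n, rfl⟩
    exact h
  have hex : ∀ n : ℕ, ∃ f : Fin (arG Sg.sig) → A.Q × (Fin m → ℕ),
      A.trans A.init Sg.sig f ∧ (∀ i, (f i).2 ∈ A.D) ∧
      (∀ i, A.Acc (f i).1 (0 + (f i).2) ((![gpow n hashT, gpow n hashT] :
        Fin (arG Sg.sig) → GTree Sg arG) i)) := by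
    intro n
    obtain ⟨f, ht, _, hc⟩ := A.acc_node_inv (hmem n)
    exact ⟨f, ht, A.transD _ _ _ ht, hc⟩
  choose f hf1 hf2 hf3 using hex
  let T := Fin (arG Sg.sig) → A.Q × {x // x ∈ A.D}
  haveI : Finite T := by
    haveI : Finite (A.Q × {x // x ∈ A.D}) := by infer_instance
    infer_instance
  let F : ℕ → T := fun n i => ((f n i).1, ⟨(f n i).2, hf2 n i⟩)
  obtain ⟨n, k, hnk, hFnk⟩ := Finite.exists_ne_map_eq_of_infinite F
  have hfeq : f n = f k := by
    funext i
    have hh := congrFun hFnk i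
    have h1 := congrArg Prod.fst hh
    have h2 := congrArg (fun p : A.Q × {x // x ∈ A.D} => (p.2 : Fin m → ℕ)) hh
    exact Prod.ext (h1 : (f n i).1 = (f k i).1) (h2 : (f n i).2 = (f k i).2)
  have hacc : A.Acc A.init 0 (sigT (gpow n hashT) (gpow k hashT)) := by
    show A.Acc A.init 0 (GTree.node Sg.sig ![gpow n hashT, gpow k hashT])
    refine PTA.Acc.node (f := f n) (hf1 n) (fun h => absurd h (by decide)) (fun i => ?_)
    rcases i with ⟨iv, hiv⟩
    have hiv' : iv < 2 := hiv
    interval_cases iv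
    · exact hf3 n ⟨0, hiv⟩
    · rw [hfeq]
      exact hf3 k ⟨1, hiv⟩
  have hLgg : sigT (gpow n hashT) (gpow k hashT) ∈ Lgg := by rw [← hA]; exact hacc
  obtain ⟨j, hj⟩ := hLgg
  have h' : (![gpow n hashT, gpow k hashT] : Fin (arG Sg.sig) → _)
      = ![gpow j hashT, gpow j hashT] := by
    injection hj with h1 h2
  have e0 := congrFun h' ⟨0, by decide⟩
  have e1 := congrFun h' ⟨1, by decide⟩
  exact hnk ((gpow_inj e0).trans (gpow_inj e1).symm)
/-! ### Part 3 : a PTA for L_ab -/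

namespace GTree
variable {S : Type} {ar : S → ℕ}

def rootSym : GTree S ar → S
  | node s _ => s

lemma pathWords_leaf {s : S} (h : ar s = 0) (c : Fin (ar s) → GTree S ar) :
    (GTree.node s c).pathWords = [[s]] := by rw [pathWords, dif_pos h]

lemma exists_node (t : GTree S ar) : ∃ s c, t = node s c := by
  cases t; exact ⟨_, _, rfl⟩

end GTree

inductive Qab : Type where | P | B
  deriving DecidableEq

instance : Fintype Qab :=
  ⟨⟨{Qab.P, Qab.B}, by decide⟩, fun x => by cases x <;> decide⟩

def transAb : Qab → (s : Sab) → (Fin (arAb s) → Qab × (Fin 2 → ℕ)) → Prop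
  | .P, .a, f => ∀ i, ((f i).1 = .P ∨ (f i).1 = .B) ∧ (f i).2 = eL
  | .B, .b, f => ∀ i, (f i).1 = .B ∧ (f i).2 = eR
  | .B, .hash, _ => True
  | _, _, _ => False

def Aab : PTA Sab arAb 2 where
  Q := Qab
  finQ := inferInstance
  init := .P
  D := {eL, eR}
  trans := transAb
  transD := by
    intro q s f h i
    cases q <;> cases s <;> simp only [transAb] at h <;>
      first
        | (rw [(h i).2]; simp)
        | exact absurd i.isLt (Nat.not_lt_zero _)
  C := {v | v 0 = v 1 ∧ 1 ≤ v 0}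
  semiC := by
    refine ⟨1, fun _ => {v | v 0 = v 1 ∧ 1 ≤ v 0},
      fun _ => ⟨1, (fun _ => 1), fun _ => fun _ => 1, ?_⟩, (Set.iUnion_const _).symm⟩
    ext v
    simp only [Set.mem_setOf_eq, Fin.sum_univ_one]
    constructor
    · rintro ⟨h1, h2⟩
      refine ⟨fun _ => v 0 - 1, funext fun j => ?_⟩
      fin_cases j <;> simp <;> omega
    · rintro ⟨c, rfl⟩
      constructor <;> simp
lemma aab_sound : ∀ (t : GTree Sab arAb) (q : Qab) (w : Fin 2 → ℕ), Aab.Acc q w t →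
    ∀ p ∈ t.pathWords,
      (q = .P → ∃ n k, 1 ≤ n ∧
        p = List.replicate n Sab.a ++ List.replicate k Sab.b ++ [Sab.hash] ∧
        w 0 + n = w 1 + k) ∧
      (q = .B → ∃ k, p = List.replicate k Sab.b ++ [Sab.hash] ∧
        w 0 = w 1 + k ∧ 1 ≤ w 0) := by
  intro t
  induction t with
  | node s c ih =>
    intro q w h p hp
    obtain ⟨f, ht, hC, hc⟩ := Aab.acc_node_inv h
    cases s
    case hash =>
      rw [GTree.pathWords_leaf (ar := arAb) (s := Sab.hash) rfl c] at hp
      simp only [List.mem_singleton] at hp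
      subst hp
      cases q
      case P => exact False.elim ht
      case B =>
        have hCC : w 0 = w 1 ∧ 1 ≤ w 0 := hC rfl
        exact ⟨fun hq => Qab.noConfusion hq,
          fun _ => ⟨0, rfl, by omega, hCC.2⟩⟩
    case a =>
      have harn : arAb Sab.a ≠ 0 := by decide
      obtain ⟨i, p', hp', rfl⟩ := (GTree.mem_pathWords_node harn).1 hp
      cases q
      case B => exact False.elim ht
      case P =>
        have ht' : ∀ i, ((f i).1 = Qab.P ∨ (f i).1 = Qab.B) ∧ (f i).2 = eL := ht
        refine ⟨fun _ => ?_, fun hq => Qab.noConfusion hq⟩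
        obtain ⟨hor, he⟩ := ht' i
        have hci := hc i
        rw [he] at hci
        have e0 : (w + eL) 0 = w 0 + 1 := by simp [eL]
        have e1 : (w + eL) 1 = w 1 := by simp [eL]
        rcases hor with hP | hB
        · rw [hP] at hci
          obtain ⟨n, k, h1n, hp'', hcount⟩ := (ih i _ _ hci p' hp').1 rfl
          refine ⟨n + 1, k, by omega, ?_, ?_⟩
          · rw [hp'', List.replicate_succ]; rfl
          · rw [e0, e1] at hcount; omega
        · rw [hB] at hci
          obtain ⟨k, hp'', hcount, hpos⟩ := (ih i _ _ hci p' hp').2 rfl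
          refine ⟨1, k, le_refl 1, ?_, ?_⟩
          · rw [hp'']; rfl
          · rw [e0, e1] at hcount; omega
    case b =>
      have harn : arAb Sab.b ≠ 0 := by decide
      obtain ⟨i, p', hp', rfl⟩ := (GTree.mem_pathWords_node harn).1 hp
      cases q
      case P => exact False.elim ht
      case B =>
        have ht' : ∀ i, (f i).1 = Qab.B ∧ (f i).2 = eR := ht
        refine ⟨fun hq => Qab.noConfusion hq, fun _ => ?_⟩
        obtain ⟨hB, he⟩ := ht' i
        have hci := hc i
        rw [he, hB] at hci
        obtain ⟨k, hp'', hcount, hpos⟩ := (ih i _ _ hci p' hp').2 rfl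
        have e0 : (w + eR) 0 = w 0 := by simp [eR]
        have e1 : (w + eR) 1 = w 1 + 1 := by simp [eR]
        refine ⟨k + 1, ?_, ?_, ?_⟩
        · rw [hp'', List.replicate_succ]; rfl
        · rw [e0, e1] at hcount; omega
        · rw [e0] at hpos; exact hpos
lemma aab_completeB : ∀ (t : GTree Sab arAb) (w : Fin 2 → ℕ),
    (∀ p ∈ t.pathWords, ∃ k, p = List.replicate k Sab.b ++ [Sab.hash] ∧
      w 0 = w 1 + k) → 1 ≤ w 0 → Aab.Acc Qab.B w t := by
  intro t
  induction t with
  | node s c ih =>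
    intro w hw hpos
    cases s
    case hash =>
      have hp : [Sab.hash] ∈ (GTree.node Sab.hash c).pathWords := by
        rw [GTree.pathWords_leaf (ar := arAb) (s := Sab.hash) rfl c]; simp
      obtain ⟨k, hk, hcount⟩ := hw _ hp
      have hk0 : k = 0 := by
        cases k with
        | zero => rfl
        | succ k => rw [List.replicate_succ] at hk; simp at hk
      subst hk0
      refine PTA.Acc.node (f := fun _ => (Qab.B, eR)) trivial
        (fun _ => show w ∈ Aab.C from ⟨by omega, hpos⟩)
        (fun i => absurd i.isLt (Nat.not_lt_zero _))
    case a =>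
      exfalso
      obtain ⟨p, hp⟩ := List.exists_mem_of_ne_nil _
        (GTree.pathWords_ne_nil (GTree.node Sab.a c))
      obtain ⟨p', rfl⟩ := GTree.pathWords_head _ _ _ rfl p hp
      obtain ⟨k, hk, -⟩ := hw _ hp
      cases k with
      | zero => simp at hk
      | succ k => rw [List.replicate_succ] at hk; simp at hk
    case b =>
      have harn : arAb Sab.b ≠ 0 := by decide
      refine PTA.Acc.node (f := fun _ => (Qab.B, eR)) (fun i => ⟨rfl, rfl⟩)
        (fun h0 => absurd h0 (by decide)) (fun i => ?_)
      show Aab.Acc Qab.B (w + eR) (c i)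
      apply ih i
      · intro p' hp'
        have hp : Sab.b :: p' ∈ (GTree.node Sab.b c).pathWords :=
          (GTree.mem_pathWords_node harn).2 ⟨i, p', hp', rfl⟩
        obtain ⟨k, hk, hcount⟩ := hw _ hp
        cases k with
        | zero => exact absurd hk (by simp)
        | succ k =>
          rw [List.replicate_succ] at hk
          simp only [List.cons_append, List.cons.injEq, true_and] at hk
          refine ⟨k, hk, ?_⟩
          have e0 : (w + eR) 0 = w 0 := by simp [eR]
          have e1 : (w + eR) 1 = w 1 + 1 := by simp [eR]
          omega
      · have e0 : (w + eR) 0 = w 0 := by simp [eR]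
        omega
lemma aab_completeP : ∀ (t : GTree Sab arAb) (w : Fin 2 → ℕ),
    (∀ p ∈ t.pathWords, ∃ n k, 1 ≤ n ∧
      p = List.replicate n Sab.a ++ List.replicate k Sab.b ++ [Sab.hash] ∧
      w 0 + n = w 1 + k) →
    Aab.Acc Qab.P w t := by
  intro t
  induction t with
  | node s c ih =>
    intro w hw
    cases s
    case hash =>
      exfalso
      have hp : [Sab.hash] ∈ (GTree.node Sab.hash c).pathWords := by
        rw [GTree.pathWords_leaf (ar := arAb) (s := Sab.hash) rfl c]; simp
      obtain ⟨n, k, h1, hk, -⟩ := hw _ hp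
      rcases n with _ | n
      · omega
      · rw [List.replicate_succ] at hk; simp at hk
    case b =>
      exfalso
      obtain ⟨p, hp⟩ := List.exists_mem_of_ne_nil _
        (GTree.pathWords_ne_nil (GTree.node Sab.b c))
      obtain ⟨p', rfl⟩ := GTree.pathWords_head _ _ _ rfl p hp
      obtain ⟨n, k, h1, hk, -⟩ := hw _ hp
      rcases n with _ | n
      · omega
      · rw [List.replicate_succ] at hk; simp [List.cons_append] at hk
    case a =>
      have harn : arAb Sab.a ≠ 0 := by decide
      have hchild : ∀ (i : Fin (arAb Sab.a)) p', p' ∈ (c i).pathWords →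
          ∃ n k, 1 ≤ n ∧
            Sab.a :: p' = List.replicate n Sab.a ++ List.replicate k Sab.b ++ [Sab.hash] ∧
            w 0 + n = w 1 + k :=
        fun i p' hp' => hw _ ((GTree.mem_pathWords_node harn).2 ⟨i, p', hp', rfl⟩)
      refine PTA.Acc.node
        (f := fun i => (if (c i).rootSym = Sab.a then Qab.P else Qab.B, eL))
        ?_ (fun h0 => absurd h0 (by decide)) (fun i => ?_)
      · show ∀ i : Fin (arAb Sab.a),
          ((if (c i).rootSym = Sab.a then Qab.P else Qab.B) = Qab.P ∨
            (if (c i).rootSym = Sab.a then Qab.P else Qab.B) = Qab.B) ∧ eL = eL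
        intro i
        refine ⟨?_, rfl⟩
        by_cases hr : (c i).rootSym = Sab.a
        · rw [if_pos hr]; exact Or.inl rfl
        · rw [if_neg hr]; exact Or.inr rfl
      · show Aab.Acc (if (c i).rootSym = Sab.a then Qab.P else Qab.B) (w + eL) (c i)
        have e0 : (w + eL) 0 = w 0 + 1 := by simp [eL]
        have e1 : (w + eL) 1 = w 1 := by simp [eL]
        obtain ⟨s', c', hcc⟩ := GTree.exists_node (c i)
        by_cases hr : (c i).rootSym = Sab.a
        · erw [if_pos hr]
          apply ih i
          intro p' hp'
          obtain ⟨n, k, h1, hk, hcount⟩ := hchild i p' hp'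
          obtain ⟨p'', hpp⟩ := GTree.pathWords_head (c i) s' c' hcc p' hp'
          have hs' : s' = Sab.a := by rw [hcc] at hr; exact hr
          rcases n with _ | n
          · omega
          · rw [List.replicate_succ] at hk
            simp only [List.cons_append, List.cons.injEq, true_and] at hk
            rcases n with _ | n
            · exfalso
              rw [hpp, hs'] at hk
              simp only [List.replicate_zero, List.nil_append] at hk
              cases k with
              | zero => simp at hk
              | succ k => rw [List.replicate_succ] at hk; simp at hk
            · exact ⟨n + 1, k, by omega, hk, by omega⟩
        · erw [if_neg hr]
          apply aab_completeB
          · intro p' hp'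
            obtain ⟨n, k, h1, hk, hcount⟩ := hchild i p' hp'
            obtain ⟨p'', hpp⟩ := GTree.pathWords_head (c i) s' c' hcc p' hp'
            have hs' : s' ≠ Sab.a := by rw [hcc] at hr; exact hr
            rcases n with _ | n
            · omega
            · rw [List.replicate_succ] at hk
              simp only [List.cons_append, List.cons.injEq, true_and] at hk
              rcases n with _ | n
              · simp only [List.replicate_zero, List.nil_append] at hk
                exact ⟨k, hk, by omega⟩
              · exfalso
                rw [hpp, List.replicate_succ] at hk
                simp only [List.cons_append, List.cons.injEq] at hk
                exact hs' hk.1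
          · omega
lemma part3 : Aab.Lang = Lab := by
  ext ξ
  constructor
  · intro h
    have h' : Aab.Acc Qab.P 0 ξ := h
    intro p hp
    obtain ⟨n, k, h1, hform, hcount⟩ := (aab_sound ξ _ _ h' p hp).1 rfl
    have hnk : n = k := by simpa using hcount
    exact ⟨n, h1, by rw [hform, hnk]⟩
  · intro h
    show Aab.Acc Aab.init 0 ξ
    apply aab_completeP
    intro p hp
    obtain ⟨n, hn1, hform⟩ := h p hp
    exact ⟨n, n, hn1, hform, by simp⟩
/-! ### Part 4 : L_ab is not GPTA-recognizable -/

def hashAb : GTree Sab arAb := .node .hash ![]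
def anodeAb (l r : GTree Sab arAb) : GTree Sab arAb := .node .a ![l, r]
def bnodeAb (l r : GTree Sab arAb) : GTree Sab arAb := .node .b ![l, r]

def Btree : ℕ → GTree Sab arAb
  | 0 => hashAb
  | n + 1 => bnodeAb (Btree n) (Btree n)

def Atree : ℕ → ℕ → GTree Sab arAb
  | 0, n => Btree n
  | k + 1, n => anodeAb (Atree k n) (Atree k n)

lemma pathWords_Btree : ∀ n w, w ∈ (Btree n).pathWords →
    w = List.replicate n Sab.b ++ [Sab.hash] := by
  intro n
  induction n with
  | zero =>
    intro w hw
    erw [show Btree 0 = GTree.node Sab.hash ![] from rfl,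
      GTree.pathWords_leaf (ar := arAb) (s := Sab.hash) rfl] at hw
    simpa using hw
  | succ n ihn =>
    intro w hw
    rw [show Btree (n+1) = GTree.node Sab.b ![Btree n, Btree n] from rfl] at hw
    obtain ⟨i, w', hw', rfl⟩ := (GTree.mem_pathWords_node (by decide)).1 hw
    have hi : (![Btree n, Btree n] : Fin (arAb Sab.b) → GTree Sab arAb) i = Btree n := by
      rcases i with ⟨iv, hiv⟩
      have hiv' : iv < 2 := hiv
      interval_cases iv <;> rfl
    rw [hi] at hw'
    rw [ihn w' hw', List.replicate_succ]
    rfl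

lemma pathWords_Atree : ∀ k n w, w ∈ (Atree k n).pathWords →
    w = List.replicate k Sab.a ++ List.replicate n Sab.b ++ [Sab.hash] := by
  intro k
  induction k with
  | zero =>
    intro n w hw
    have := pathWords_Btree n w hw
    simpa using this
  | succ k ihk =>
    intro n w hw
    rw [show Atree (k+1) n = GTree.node Sab.a ![Atree k n, Atree k n] from rfl] at hw
    obtain ⟨i, w', hw', rfl⟩ := (GTree.mem_pathWords_node (by decide)).1 hw
    have hi : (![Atree k n, Atree k n] : Fin (arAb Sab.a) → GTree Sab arAb) i
        = Atree k n := by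
      rcases i with ⟨iv, hiv⟩
      have hiv' : iv < 2 := hiv
      interval_cases iv <;> rfl
    rw [hi] at hw'
    rw [ihk n w' hw', List.replicate_succ]
    rfl
def spineT (base : GTree Sab arAb) : ℕ → (ℕ → GTree Sab arAb) → GTree Sab arAb
  | 0, _ => base
  | k + 1, ts => anodeAb (spineT base k (fun j => ts (j + 1))) (ts 0)

lemma Atree_eq_spineT : ∀ (K k n : ℕ),
    Atree (k + K) n = spineT (Atree k n) K (fun t => Atree (k + K - t - 1) n) := by
  intro K
  induction K with
  | zero => intro k n; rfl
  | succ K ihK =>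
    intro k n
    have hfg : (fun j => Atree (k + (K+1) - (j+1) - 1) n)
        = (fun j => Atree (k + K - j - 1) n) := by
      funext j
      congr 1
      omega
    have unfold : spineT (Atree k n) (K+1) (fun t => Atree (k + (K+1) - t - 1) n)
        = anodeAb (spineT (Atree k n) K (fun j => Atree (k + (K+1) - (j+1) - 1) n))
            (Atree (k + (K+1) - 0 - 1) n) := rfl
    rw [unfold, hfg, ← ihK k n]
    have h2 : k + (K+1) - 0 - 1 = k + K := by omega
    rw [h2]
    rfl

lemma spineT_pathWords_mem (base : GTree Sab arAb) :
    ∀ (K : ℕ) (ts : ℕ → GTree Sab arAb) (j : ℕ), j < K → ∀ w ∈ (ts j).pathWords,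
      List.replicate (j+1) Sab.a ++ w ∈ (spineT base K ts).pathWords := by
  intro K
  induction K with
  | zero => intro ts j hj; omega
  | succ K ihK =>
    intro ts j hj w hw
    show List.replicate (j+1) Sab.a ++ w ∈
      (@GTree.node Sab arAb Sab.a ![spineT base K (fun i => ts (i+1)), ts 0]).pathWords
    rcases j with _ | j
    · exact (GTree.mem_pathWords_node (by decide)).2 ⟨⟨1, Nat.one_lt_two⟩, w, hw, rfl⟩
    · have hin := ihK (fun i => ts (i+1)) j (by omega) w hw
      exact (GTree.mem_pathWords_node (by decide)).2
        ⟨⟨0, Nat.zero_lt_two⟩, List.replicate (j+1) Sab.a ++ w, hin, rfl⟩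
lemma spine_decomp {m : ℕ} (A : GPTA Sab arAb m) (base : GTree Sab arAb) :
    ∀ (K : ℕ) (ts0 : ℕ → GTree Sab arAb) (q : A.Q) (v : Fin m → ℕ),
      A.Run q (spineT base K ts0) v →
      ∃ (qs : ℕ → A.Q) (us : ℕ → Fin m → ℕ) (c0 : Fin m → ℕ),
        (∀ t < K, A.Run (qs t) (ts0 t) (us t)) ∧
        v = c0 + ∑ t ∈ Finset.range K, us t ∧
        ∀ (ts : ℕ → GTree Sab arAb) (ws : ℕ → Fin m → ℕ),
          (∀ t < K, A.Run (qs t) (ts t) (ws t)) →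
          A.Run q (spineT base K ts) (c0 + ∑ t ∈ Finset.range K, ws t) := by
  intro K
  induction K with
  | zero =>
    intro ts0 q v h
    refine ⟨fun _ => q, fun _ => 0, v, fun t ht => absurd ht (by omega), by simp,
      fun ts ws _ => ?_⟩
    rw [show v + ∑ t ∈ Finset.range 0, ws t = v by simp]
    exact h
  | succ K ihK =>
    intro ts0 q v h
    have h' : A.Run q
        (@GTree.node Sab arAb Sab.a ![spineT base K (fun j => ts0 (j+1)), ts0 0]) v := h
    obtain ⟨d, f, vv, ht, hc, rfl⟩ := A.run_node_inv h'
    have hcL := hc ⟨0, Nat.zero_lt_two⟩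
    have hcR := hc ⟨1, Nat.one_lt_two⟩
    obtain ⟨qs', us', c0', hrun', hveq', hrebuild'⟩ :=
      ihK (fun j => ts0 (j+1)) (f ⟨0, Nat.zero_lt_two⟩) (vv ⟨0, Nat.zero_lt_two⟩) hcL
    refine ⟨fun t => Nat.casesOn t (f ⟨1, Nat.one_lt_two⟩) (fun t' => qs' t'),
            fun t => Nat.casesOn t (vv ⟨1, Nat.one_lt_two⟩) (fun t' => us' t'),
            d + c0', ?_, ?_, ?_⟩
    · intro t ht'
      rcases t with _ | t
      · exact hcR
      · exact hrun' t (by omega)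
    · rw [sum2 (k := arAb Sab.a) rfl vv, Finset.sum_range_succ']
      show d + (vv ⟨0, Nat.zero_lt_two⟩ + vv ⟨1, Nat.one_lt_two⟩)
          = d + c0' + (∑ t ∈ Finset.range K, us' t + vv ⟨1, Nat.one_lt_two⟩)
      rw [hveq']
      abel
    · intro ts ws hws
      have hreb := hrebuild' (fun j => ts (j+1)) (fun j => ws (j+1))
        (fun t ht' => hws (t+1) (by omega))
      have hR : A.Run (f ⟨1, Nat.one_lt_two⟩) (ts 0) (ws 0) := hws 0 (by omega)
      have hc2 : ∀ i : Fin (arAb Sab.a), A.Run (f i)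
          ((![spineT base K (fun j => ts (j+1)), ts 0] :
            Fin (arAb Sab.a) → GTree Sab arAb) i)
          ((fun i : Fin (arAb Sab.a) =>
            if (i : ℕ) = 0 then c0' + ∑ t ∈ Finset.range K, ws (t+1) else ws 0) i) := by
        intro i
        rcases i with ⟨iv, hiv⟩
        have hiv' : iv < 2 := hiv
        interval_cases iv
        · exact hreb
        · exact hR
      have hrun2 := GPTA.Run.node (A := A) ht hc2
      have hvfin : d + ∑ i : Fin (arAb Sab.a), (fun i : Fin (arAb Sab.a) =>
            if (i : ℕ) = 0 then c0' + ∑ t ∈ Finset.range K, ws (t+1) else ws 0) i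
          = (d + c0') + ∑ t ∈ Finset.range (K+1), ws t := by
        rw [sum2 (k := arAb Sab.a) rfl, Finset.sum_range_succ']
        show d + ((c0' + ∑ t ∈ Finset.range K, ws (t+1)) + ws 0) = _
        abel
      rw [hvfin] at hrun2
      exact hrun2
lemma part4 : ¬ ∃ (m : ℕ) (A : GPTA Sab arAb m), A.Lang = Lab := by
  rintro ⟨m, A, hA⟩
  haveI := A.finQ
  set K := Fintype.card A.Q + 1 with hK
  set N := K + 1 with hN
  have hmem : Atree N N ∈ A.Lang := by
    rw [hA]
    intro p hp
    exact ⟨N, by omega, pathWords_Atree N N p hp⟩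
  obtain ⟨v, hrun, hvC⟩ := hmem
  have heq : Atree N N = spineT (Atree 1 N) K (fun t => Atree (N - t - 1) N) := by
    have h := Atree_eq_spineT K 1 N
    rw [show 1 + K = N from by omega] at h
    exact h
  rw [heq] at hrun
  obtain ⟨qs, us, c0, hruns, hveq, hrebuild⟩ :=
    spine_decomp A (Atree 1 N) K _ A.init v hrun
  have hcard : Fintype.card A.Q < Fintype.card (Fin K) := by
    simp only [Fintype.card_fin]
    omega
  obtain ⟨t1, t2, hne, hqeq⟩ :=
    Fintype.exists_ne_map_eq_of_card_lt (fun t : Fin K => qs (t : ℕ)) hcard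
  have hqeq' : qs (t1 : ℕ) = qs (t2 : ℕ) := hqeq
  set σ := Equiv.swap (t1 : ℕ) (t2 : ℕ) with hσ
  have hruns2 : ∀ t < K, A.Run (qs t) (Atree (N - σ t - 1) N) (us (σ t)) := by
    intro t ht'
    rw [hσ, Equiv.swap_apply_def]
    split_ifs with h1 h2
    · rw [h1, hqeq']
      exact hruns _ t2.isLt
    · rw [h2, ← hqeq']
      exact hruns _ t1.isLt
    · exact hruns t ht'
  have hrun2 := hrebuild (fun t => Atree (N - σ t - 1) N) (fun t => us (σ t)) hruns2
  have hsum : ∑ t ∈ Finset.range K, us (σ t) = ∑ t ∈ Finset.range K, us t := by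
    refine Finset.sum_equiv σ (fun i => ?_) (fun i _ => rfl)
    rw [hσ]
    simp only [Finset.mem_range, Equiv.swap_apply_def]
    split_ifs with h1 h2
    · constructor <;> intro <;> [exact t2.isLt; exact (h1 ▸ t1.isLt)]
    · constructor <;> intro <;> [exact t1.isLt; exact (h2 ▸ t2.isLt)]
    · exact Iff.rfl
  rw [hsum, ← hveq] at hrun2
  have hbad : spineT (Atree 1 N) K (fun t => Atree (N - σ t - 1) N) ∈ Lab := by
    rw [← hA]
    exact ⟨v, hrun2, hvC⟩
  obtain ⟨w0, hw0⟩ := List.exists_mem_of_ne_nil _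
    (GTree.pathWords_ne_nil (Atree (N - σ (t1 : ℕ) - 1) N))
  have hw0form := pathWords_Atree _ _ _ hw0
  have hmem2 := spineT_pathWords_mem (Atree 1 N) K
    (fun t => Atree (N - σ t - 1) N) (t1 : ℕ) t1.isLt w0 hw0
  obtain ⟨n, hn1, hform⟩ := hbad _ hmem2
  rw [hw0form] at hform
  have hσt1 : σ (t1 : ℕ) = (t2 : ℕ) := Equiv.swap_apply_left _ _
  rw [hσt1] at hform
  have hca := congrArg (List.count Sab.a) hform
  have hcb := congrArg (List.count Sab.b) hform
  simp [List.count_append, List.count_replicate] at hca hcb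
  have ht1K : (t1 : ℕ) < K := t1.isLt
  have ht2K : (t2 : ℕ) < K := t2.isLt
  have : (t1 : ℕ) = (t2 : ℕ) := by omega
  exact hne (Fin.ext this)
/-! The classes of tree languages recognizable by GPTA and by non-global PTA are
incomparable: L_γγ is GPTA- but not PTA-recognizable, and L_ab is PTA- but not
GPTA-recognizable. -/

theorem gpta_pta_incomparable :
    (∃ (m : ℕ) (A : GPTA Sg arG m), A.Lang = Lgg) ∧
    (¬ ∃ (m : ℕ) (A : PTA Sg arG m), A.Lang = Lgg) ∧
    (∃ (m : ℕ) (A : PTA Sab arAb m), A.Lang = Lab) ∧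
    (¬ ∃ (m : ℕ) (A : GPTA Sab arAb m), A.Lang = Lab) := by
  exact ⟨⟨2, Agg, part1⟩, part2, ⟨2, Aab, part3⟩, part4⟩
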